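/- arXiv:1211.6898 — 6 statements merged into one kernel-verified Lean document; each statement's English description precedes it below -/
import Mathlib

section
/- In Approximate Value Iteration, with π_{i+1} any policy greedy with respect to v_i, one has by induction T_{π_k} v_{k−1} = T_{π_k} T_{π_{k−1}} ⋯ T_{π_{k−m+1}} v_{k−m} + Σ_{i=1}^{m−1} Γ_{k,i} ε_{k−i} for all 1 ≤ m ≤ k. -/
open Finset Filter

variable {S A : Type*} [Fintype S] [Nonempty S] [DecidableEq S] [Fintype A] [Nonempty A]

/-- `P s a s'` is the probability of moving to `s'` when taking action `a` in state `s`. -/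
def IsStochastic (P : S → A → S → ℝ) : Prop :=
  (∀ s a s', 0 ≤ P s a s') ∧ ∀ s a, ∑ s', P s a s' = 1

/-- Bellman operator `T_π` of a stationary deterministic policy `π`. -/
noncomputable def Tpol (P : S → A → S → ℝ) (r : S → A → ℝ) (γ : ℝ)
    (π : S → A) (v : S → ℝ) : S → ℝ :=
  fun s => r s (π s) + γ * ∑ s', P s (π s) s' * v s'

/-- Bellman optimality operator `T`. -/
noncomputable def Topt (P : S → A → S → ℝ) (r : S → A → ℝ) (γ : ℝ) (v : S → ℝ) : S → ℝ :=
  fun s => univ.sup' univ_nonempty (fun a => r s a + γ * ∑ s', P s a s' * v s')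

/-- Application of the transition matrix `P_π` to a value function. -/
noncomputable def Pap (P : S → A → S → ℝ) (π : S → A) (v : S → ℝ) : S → ℝ :=
  fun s => ∑ s', P s (π s) s' * v s'

/-- `Tcomp P r γ πs k m = T_{π_k} T_{π_{k-1}} ⋯ T_{π_{k-m+1}}`. -/
noncomputable def Tcomp (P : S → A → S → ℝ) (r : S → A → ℝ) (γ : ℝ)
    (πs : ℕ → S → A) : ℕ → ℕ → (S → ℝ) → (S → ℝ)
  | _, 0, v => v
  | k, m+1, v => Tpol P r γ (πs k) (Tcomp P r γ πs (k-1) m v)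

/-- `Gap P γ πs k m = (γP_{π_k})(γP_{π_{k-1}})⋯(γP_{π_{k-m+1}})` applied to a value function. -/
noncomputable def Gap (P : S → A → S → ℝ) (γ : ℝ)
    (πs : ℕ → S → A) : ℕ → ℕ → (S → ℝ) → (S → ℝ)
  | _, 0, v => v
  | k, m+1, v => γ • Pap P (πs k) (Gap P γ πs (k-1) m v)

lemma Tpol_add (P : S → A → S → ℝ) (r : S → A → ℝ) (γ : ℝ) (π : S → A) (u w : S → ℝ) :
    Tpol P r γ π (u + w) = Tpol P r γ π u + γ • Pap P π w := by
  funext s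
  simp only [Tpol, Pap, Pi.add_apply, Pi.smul_apply, smul_eq_mul, mul_add,
    Finset.sum_add_distrib]
  ring

lemma Tcomp_add (P : S → A → S → ℝ) (r : S → A → ℝ) (γ : ℝ) (πs : ℕ → S → A) :
    ∀ m k (u w : S → ℝ), Tcomp P r γ πs k m (u + w) =
      Tcomp P r γ πs k m u + Gap P γ πs k m w := by
  intro m
  induction m with
  | zero => intro k u w; rfl
  | succ n ih =>
    intro k u w
    simp only [Tcomp, Gap, ih, Tpol_add]

lemma Tcomp_succ (P : S → A → S → ℝ) (r : S → A → ℝ) (γ : ℝ) (πs : ℕ → S → A) :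
    ∀ m k (u : S → ℝ), Tcomp P r γ πs k (m+1) u =
      Tcomp P r γ πs k m (Tpol P r γ (πs (k-m)) u) := by
  intro m
  induction m with
  | zero => intro k u; rfl
  | succ n ih =>
    intro k u
    show Tpol P r γ (πs k) (Tcomp P r γ πs (k-1) (n+1) u) = _
    rw [ih (k-1) u]
    have : k - 1 - n = k - (n+1) := by omega
    rw [this]
    rfl

/-- In AVI with greedy policies,
`T_{π_k} v_{k−1} = T_{π_k} ⋯ T_{π_{k−m+1}} v_{k−m} + Σ_{i=1}^{m−1} Γ_{k,i} ε_{k−i}`. -/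
theorem avi_greedy_decomposition (P : S → A → S → ℝ) (r : S → A → ℝ) (γ : ℝ)
    (hP : IsStochastic P) (hγ0 : 0 < γ) (hγ1 : γ < 1)
    (v : ℕ → S → ℝ) (εf : ℕ → S → ℝ) (πs : ℕ → S → A)
    (hAVI : ∀ k : ℕ, v (k+1) = Topt P r γ (v k) + εf (k+1))
    (hgreedy : ∀ i : ℕ, Tpol P r γ (πs (i+1)) (v i) = Topt P r γ (v i)) :
    ∀ k m : ℕ, 1 ≤ m → m ≤ k →
      Tpol P r γ (πs k) (v (k-1)) =
        Tcomp P r γ πs k m (v (k-m)) + ∑ i ∈ Finset.Icc 1 (m-1), Gap P γ πs k i (εf (k-i)) := by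
  intro k m
  induction m with
  | zero => intro h; omega
  | succ n ih =>
    intro _ hk
    cases n with
    | zero => simp [Tcomp]
    | succ p =>
      have ih' := ih (by omega) (by omega)
      rw [ih']
      have hsum : ∑ i ∈ Finset.Icc 1 (p+1), Gap P γ πs k i (εf (k-i)) =
          (∑ i ∈ Finset.Icc 1 p, Gap P γ πs k i (εf (k-i))) +
            Gap P γ πs k (p+1) (εf (k-(p+1))) := by
        rw [← Finset.sum_Icc_succ_top (by omega)]
      simp only [Nat.add_sub_cancel] at *
      have hk1 : k - (p+1) = (k - (p+2)) + 1 := by omega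
      have key : v (k - (p+1)) =
          Tpol P r γ (πs (k - (p+1))) (v (k - (p+2))) + εf (k - (p+1)) := by
        rw [hk1, hAVI, hgreedy]
      have main : Tcomp P r γ πs k (p+1) (v (k-(p+1))) =
          Tcomp P r γ πs k (p+2) (v (k-(p+2))) + Gap P γ πs k (p+1) (εf (k-(p+1))) := by
        rw [key, Tcomp_add, Tcomp_succ P r γ πs (p+1) k]
      rw [main, hsum]
      abel
end

section
/- AVI non-stationary evaluation lemma: for all m and k with 1 ≤ m ≤ k, ‖T v_{k−1} − v_{π_{k,m}}‖_∞ ≤ γ^m ‖v_{k−m} − v_{π_{k,m}}‖_∞ + (γ − γ^m)/(1 − γ) · ε. -/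
open Finset Filter

variable {S A : Type*} [Fintype S] [Nonempty S] [DecidableEq S] [Fintype A] [Nonempty A]

lemma pap_bound (P : S → A → S → ℝ) (hP : IsStochastic P) (π : S → A) (u : S → ℝ) (s : S) :
    |∑ s', P s (π s) s' * u s'| ≤ ‖u‖ := by
  calc |∑ s', P s (π s) s' * u s'| ≤ ∑ s', |P s (π s) s' * u s'| := Finset.abs_sum_le_sum_abs _ _
    _ ≤ ∑ s', P s (π s) s' * ‖u‖ := by
        refine Finset.sum_le_sum fun s' _ => ?_
        rw [abs_mul, abs_of_nonneg (hP.1 s (π s) s')]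
        exact mul_le_mul_of_nonneg_left (norm_le_pi_norm u s') (hP.1 s (π s) s')
    _ = ‖u‖ := by rw [← Finset.sum_mul, hP.2 s (π s), one_mul]

lemma tpol_contract (P : S → A → S → ℝ) (r : S → A → ℝ) (γ : ℝ)
    (hP : IsStochastic P) (hγ0 : 0 < γ) (π : S → A) (v w : S → ℝ) :
    ‖Tpol P r γ π v - Tpol P r γ π w‖ ≤ γ * ‖v - w‖ := by
  refine (pi_norm_le_iff_of_nonneg (by positivity)).2 fun s => ?_
  have : (Tpol P r γ π v - Tpol P r γ π w) s = γ * ∑ s', P s (π s) s' * (v - w) s' := by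
    simp only [Pi.sub_apply, Tpol, Finset.mul_sum, add_sub_add_left_eq_sub,
      ← Finset.sum_sub_distrib]
    exact Finset.sum_congr rfl fun x _ => by ring
  rw [this, Real.norm_eq_abs, abs_mul, abs_of_pos hγ0]
  exact mul_le_mul_of_nonneg_left (pap_bound P hP π _ s) hγ0.le

lemma key_lemma (P : S → A → S → ℝ) (r : S → A → ℝ) (γ : ℝ)
    (hP : IsStochastic P) (hγ0 : 0 < γ)
    (v : ℕ → S → ℝ) (εf : ℕ → S → ℝ) (ε : ℝ) (πs : ℕ → S → A)
    (hAVI : ∀ k : ℕ, v (k+1) = Topt P r γ (v k) + εf (k+1))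
    (herr : ∀ k : ℕ, 1 ≤ k → ‖εf k‖ ≤ ε)
    (hgreedy : ∀ i : ℕ, Tpol P r γ (πs (i+1)) (v i) = Topt P r γ (v i))
    (w : S → ℝ) :
    ∀ n j : ℕ, n ≤ j → ‖v j - Tcomp P r γ πs j n w‖ ≤
      γ ^ n * ‖v (j-n) - w‖ + (∑ i ∈ Finset.range n, γ ^ i) * ε := by
  intro n
  induction n with
  | zero => intro j _; simp [Tcomp]
  | succ n ih =>
    intro j hj
    have hj1 : 1 ≤ j := le_trans (Nat.succ_le_succ (Nat.zero_le n)) hj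
    have hvj : v j = Tpol P r γ (πs j) (v (j-1)) + εf j := by
      have h1 : j - 1 + 1 = j := Nat.succ_pred_eq_of_pos hj1
      have := hAVI (j-1)
      rw [h1] at this
      rw [this, ← hgreedy (j-1), h1]
    have hsplit : v j - Tcomp P r γ πs j (n+1) w =
        εf j + (Tpol P r γ (πs j) (v (j-1)) - Tpol P r γ (πs j) (Tcomp P r γ πs (j-1) n w)) := by
      rw [hvj]; show _ = _ ; funext s; simp [Tcomp]; ring
    have hb : ‖v j - Tcomp P r γ πs j (n+1) w‖ ≤
        ε + γ * ‖v (j-1) - Tcomp P r γ πs (j-1) n w‖ := by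
      rw [hsplit]
      exact le_trans (norm_add_le _ _)
        (add_le_add (herr j hj1) (tpol_contract P r γ hP hγ0 _ _ _))
    have ihb := ih (j-1) (by omega)
    have hidx : j - 1 - n = j - (n+1) := by omega
    rw [hidx] at ihb
    calc ‖v j - Tcomp P r γ πs j (n+1) w‖
        ≤ ε + γ * (γ ^ n * ‖v (j-(n+1)) - w‖ + (∑ i ∈ Finset.range n, γ ^ i) * ε) := by
          exact le_trans hb (by nlinarith [norm_nonneg (v (j-(n+1)) - w)])
      _ = γ ^ (n+1) * ‖v (j-(n+1)) - w‖ + (∑ i ∈ Finset.range (n+1), γ ^ i) * ε := by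
          rw [geom_sum_succ]
          ring

/-- AVI non-stationary evaluation lemma:
`‖T v_{k−1} − v_{π_{k,m}}‖ ≤ γ^m ‖v_{k−m} − v_{π_{k,m}}‖ + (γ − γ^m)/(1 − γ) ε`. -/
theorem avi_nonstationary_evaluation (P : S → A → S → ℝ) (r : S → A → ℝ) (γ : ℝ)
    (hP : IsStochastic P) (hγ0 : 0 < γ) (hγ1 : γ < 1)
    (v : ℕ → S → ℝ) (εf : ℕ → S → ℝ) (ε : ℝ) (hε : 0 ≤ ε) (πs : ℕ → S → A)
    (hAVI : ∀ k : ℕ, v (k+1) = Topt P r γ (v k) + εf (k+1))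
    (herr : ∀ k : ℕ, 1 ≤ k → ‖εf k‖ ≤ ε)
    (hgreedy : ∀ i : ℕ, Tpol P r γ (πs (i+1)) (v i) = Topt P r γ (v i))
    (k m : ℕ) (hm : 1 ≤ m) (hk : m ≤ k)
    (vkm : S → ℝ) (hfix : Tcomp P r γ πs k m vkm = vkm) :
    ‖Topt P r γ (v (k-1)) - vkm‖ ≤ γ ^ m * ‖v (k-m) - vkm‖ + (γ - γ ^ m) / (1 - γ) * ε := by
  obtain ⟨n, rfl⟩ := Nat.exists_eq_add_of_le hm
  set m := 1 + n with hmdef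
  have hk1 : 1 ≤ k := le_trans hm hk
  have hT : Topt P r γ (v (k-1)) = Tpol P r γ (πs k) (v (k-1)) := by
    have h1 : k - 1 + 1 = k := Nat.succ_pred_eq_of_pos hk1
    rw [← hgreedy (k-1), h1]
  have hvkm : vkm = Tpol P r γ (πs k) (Tcomp P r γ πs (k-1) n vkm) := by
    conv_lhs => rw [← hfix]
    have : m = n + 1 := by omega
    rw [this]; rfl
  have step1 : ‖Topt P r γ (v (k-1)) - vkm‖ ≤ γ * ‖v (k-1) - Tcomp P r γ πs (k-1) n vkm‖ := by
    rw [hT]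
    conv_lhs => rw [hvkm]
    exact tpol_contract P r γ hP hγ0 _ _ _
  have step2 := key_lemma P r γ hP hγ0 v εf ε πs hAVI herr hgreedy vkm n (k-1) (by omega)
  have hidx : k - 1 - n = k - m := by omega
  rw [hidx] at step2
  have hsum : γ * (∑ i ∈ Finset.range n, γ ^ i) = (γ - γ ^ m) / (1 - γ) := by
    have h1 : γ - 1 ≠ 0 := by linarith
    have h2 : (1:ℝ) - γ ≠ 0 := by linarith
    rw [geom_sum_eq (ne_of_lt hγ1), hmdef, pow_add, pow_one, mul_div_assoc',
      div_eq_div_iff h1 h2]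
    ring
  calc ‖Topt P r γ (v (k-1)) - vkm‖
      ≤ γ * (γ ^ n * ‖v (k-m) - vkm‖ + (∑ i ∈ Finset.range n, γ ^ i) * ε) :=
        le_trans step1 (mul_le_mul_of_nonneg_left step2 hγ0.le)
    _ = γ ^ m * ‖v (k-m) - vkm‖ + (γ * (∑ i ∈ Finset.range n, γ ^ i)) * ε := by
        rw [hmdef, pow_add, pow_one]; ring
    _ = _ := by rw [hsum]
end

section
/- Special case m = k of the AVI non-stationary bound: ‖v_* − v_{π_{k,k}}‖_∞ ≤ 2( γ/(1−γ) − γ^k/(1−γ^k) ) ε + (2γ^k/(1−γ^k)) ‖v_* − v_0‖_∞; consequently, lim sup_{k→∞} ‖v_* − v_{π_{k,k}}‖_∞ ≤ 2γ/(1−γ) · ε. -/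
open Finset Filter
open Topology

variable {S A : Type*} [Fintype S] [Nonempty S] [DecidableEq S] [Fintype A] [Nonempty A]

section Aux
set_option linter.unusedSectionVars false
variable {P : S → A → S → ℝ} {r : S → A → ℝ} {γ : ℝ} {πs : ℕ → S → A}

lemma abs_sum_mul_le (hP : IsStochastic P) (u : S → ℝ) (s : S) (a : A) :
    |∑ s', P s a s' * u s'| ≤ ‖u‖ := by
  calc |∑ s', P s a s' * u s'| ≤ ∑ s', |P s a s' * u s'| := Finset.abs_sum_le_sum_abs _ _
    _ ≤ ∑ s', P s a s' * ‖u‖ := by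
        refine Finset.sum_le_sum fun s' _ => ?_
        rw [abs_mul, abs_of_nonneg (hP.1 s a s')]
        refine mul_le_mul_of_nonneg_left ?_ (hP.1 s a s')
        simpa [Real.norm_eq_abs] using norm_le_pi_norm u s'
    _ = ‖u‖ := by rw [← Finset.sum_mul, hP.2 s a, one_mul]

lemma Pap_abs_le (hP : IsStochastic P) (π : S → A) (u : S → ℝ) (s : S) :
    |Pap P π u s| ≤ ‖u‖ := abs_sum_mul_le hP u s (π s)

lemma Pap_mono (hP : IsStochastic P) (π : S → A) {u w : S → ℝ} (h : ∀ s, u s ≤ w s) (s : S) :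
    Pap P π u s ≤ Pap P π w s :=
  Finset.sum_le_sum fun s' _ => mul_le_mul_of_nonneg_left (h s') (hP.1 s (π s) s')

lemma Pap_sub (π : S → A) (u w : S → ℝ) :
    Pap P π (u - w) = Pap P π u - Pap P π w := by
  funext s
  simp [Pap, mul_sub, Finset.sum_sub_distrib]

lemma Pap_neg (π : S → A) (u : S → ℝ) : Pap P π (-u) = -Pap P π u := by
  funext s; simp [Pap, mul_comm]

lemma Pap_sum (π : S → A) {ι : Type*} (t : Finset ι) (f : ι → S → ℝ) :
    Pap P π (∑ i ∈ t, f i) = ∑ i ∈ t, Pap P π (f i) := by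
  funext s
  simp only [Pap, Finset.sum_apply, Finset.mul_sum]
  rw [Finset.sum_comm]

lemma Tpol_affine (π : S → A) (u e : S → ℝ) :
    Tpol P r γ π (u + e) = Tpol P r γ π u + γ • Pap P π e := by
  funext s
  simp only [Tpol, Pap, Pi.add_apply, Pi.smul_apply, smul_eq_mul, mul_add,
    Finset.sum_add_distrib]
  ring

lemma Tpol_sub_apply (π : S → A) (u w : S → ℝ) (s : S) :
    Tpol P r γ π u s - Tpol P r γ π w s = γ * Pap P π (u - w) s := by
  simp only [Tpol, Pap, Pi.sub_apply, mul_sub, Finset.sum_sub_distrib]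
  ring

lemma Tpol_le_Topt (π : S → A) (u : S → ℝ) (s : S) :
    Tpol P r γ π u s ≤ Topt P r γ u s :=
  Finset.le_sup' (fun a => r s a + γ * ∑ s', P s a s' * u s') (Finset.mem_univ (π s))

lemma Topt_contract (hP : IsStochastic P) (hγ : 0 ≤ γ) (u w : S → ℝ) (s : S) :
    |Topt P r γ u s - Topt P r γ w s| ≤ γ * ‖u - w‖ := by
  have key : ∀ u w : S → ℝ, Topt P r γ u s ≤ Topt P r γ w s + γ * ‖u - w‖ := by
    intro u w
    refine Finset.sup'_le _ _ fun a _ => ?_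
    have h1 : r s a + γ * ∑ s', P s a s' * w s' ≤ Topt P r γ w s :=
      Finset.le_sup' (fun a => r s a + γ * ∑ s', P s a s' * w s') (Finset.mem_univ a)
    have h2 : (∑ s', P s a s' * u s') - (∑ s', P s a s' * w s') ≤ ‖u - w‖ := by
      have := abs_sum_mul_le hP (u - w) s a
      rw [abs_le] at this
      calc (∑ s', P s a s' * u s') - (∑ s', P s a s' * w s')
          = ∑ s', P s a s' * (u - w) s' := by
            simp [Pi.sub_apply, mul_sub, Finset.sum_sub_distrib]
        _ ≤ ‖u - w‖ := this.2
    nlinarith [mul_le_mul_of_nonneg_left h2 hγ]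
  rw [abs_le]
  constructor
  · have := key w u
    rw [show w - u = -(u - w) by ring, norm_neg] at this
    linarith
  · linarith [key u w]

lemma Gap_norm_le (hP : IsStochastic P) (hγ : 0 ≤ γ) :
    ∀ m k (u : S → ℝ), ‖Gap P γ πs k m u‖ ≤ γ ^ m * ‖u‖ := by
  intro m
  induction m with
  | zero => intro k u; simp [Gap]
  | succ m ih =>
    intro k u
    have hnn : 0 ≤ γ ^ (m+1) * ‖u‖ := by positivity
    rw [show Gap P γ πs k (m+1) u = γ • Pap P (πs k) (Gap P γ πs (k-1) m u) from rfl]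
    refine (pi_norm_le_iff_of_nonneg hnn).2 fun s => ?_
    rw [Pi.smul_apply, smul_eq_mul, Real.norm_eq_abs, abs_mul, abs_of_nonneg hγ]
    calc γ * |Pap P (πs k) (Gap P γ πs (k-1) m u) s|
        ≤ γ * ‖Gap P γ πs (k-1) m u‖ :=
          mul_le_mul_of_nonneg_left (Pap_abs_le hP _ _ s) hγ
      _ ≤ γ * (γ ^ m * ‖u‖) := mul_le_mul_of_nonneg_left (ih _ u) hγ
      _ = γ ^ (m+1) * ‖u‖ := by ring

lemma Gap_abs_le (hP : IsStochastic P) (hγ : 0 ≤ γ) (m k : ℕ) (u : S → ℝ) (s : S) :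
    |Gap P γ πs k m u s| ≤ γ ^ m * ‖u‖ :=
  le_trans (by simpa [Real.norm_eq_abs] using norm_le_pi_norm (Gap P γ πs k m u) s)
    (Gap_norm_le hP hγ m k u)

lemma Gap_neg (m k : ℕ) (u : S → ℝ) : Gap P γ πs k m (-u) = -Gap P γ πs k m u := by
  induction m generalizing k with
  | zero => rfl
  | succ m ih =>
    show γ • Pap P (πs k) (Gap P γ πs (k-1) m (-u)) = _
    rw [ih, Pap_neg]
    funext s; simp [Gap]

lemma Tcomp_sub (m k : ℕ) (u w : S → ℝ) :
    Tcomp P r γ πs k m u - Tcomp P r γ πs k m w = Gap P γ πs k m (u - w) := by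
  induction m generalizing k with
  | zero => rfl
  | succ m ih =>
    have h : Tcomp P r γ πs (k-1) m u = Tcomp P r γ πs (k-1) m w + Gap P γ πs (k-1) m (u - w) := by
      rw [← ih (k-1)]; abel
    show Tpol P r γ (πs k) (Tcomp P r γ πs (k-1) m u) -
        Tpol P r γ (πs k) (Tcomp P r γ πs (k-1) m w) = _
    rw [h, Tpol_affine]
    show _ = γ • Pap P (πs k) (Gap P γ πs (k-1) m (u-w))
    abel

end Aux

section Main
set_option linter.unusedSectionVars false
variable {P : S → A → S → ℝ} {r : S → A → ℝ} {γ : ℝ} {πs : ℕ → S → A}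
  {v : ℕ → S → ℝ} {εf : ℕ → S → ℝ} {ε : ℝ} {vstar : S → ℝ}

lemma dist_bound (hP : IsStochastic P) (hγ : 0 ≤ γ) (hε : 0 ≤ ε)
    (hAVI : ∀ k : ℕ, v (k+1) = Topt P r γ (v k) + εf (k+1))
    (herr : ∀ k : ℕ, 1 ≤ k → ‖εf k‖ ≤ ε)
    (hstar : Topt P r γ vstar = vstar) :
    ∀ k : ℕ, ‖vstar - v k‖ ≤ γ ^ k * ‖vstar - v 0‖ + ε * ∑ i ∈ range k, γ ^ i := by
  intro k
  induction k with
  | zero => simp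
  | succ k ih =>
    have hsumnn : (0:ℝ) ≤ ∑ i ∈ range (k+1), γ ^ i :=
      Finset.sum_nonneg fun i _ => pow_nonneg hγ i
    have hnn : (0:ℝ) ≤ γ ^ (k+1) * ‖vstar - v 0‖ + ε * ∑ i ∈ range (k+1), γ ^ i := by
      positivity
    refine (pi_norm_le_iff_of_nonneg hnn).2 fun s => ?_
    have h1 : (vstar - v (k+1)) s = (Topt P r γ vstar s - Topt P r γ (v k) s) - εf (k+1) s := by
      rw [hAVI k, hstar]; simp only [Pi.sub_apply, Pi.add_apply]; ring
    have h2 := Topt_contract (r := r) hP hγ vstar (v k) s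
    have h3 : |εf (k+1) s| ≤ ε := by
      refine le_trans ?_ (herr (k+1) (by omega))
      simpa [Real.norm_eq_abs] using norm_le_pi_norm (εf (k+1)) s
    have h4 : ‖(vstar - v (k+1)) s‖ ≤ γ * ‖vstar - v k‖ + ε := by
      rw [Real.norm_eq_abs, h1]
      calc |(Topt P r γ vstar s - Topt P r γ (v k) s) - εf (k+1) s|
          ≤ |Topt P r γ vstar s - Topt P r γ (v k) s| + |εf (k+1) s| := abs_sub _ _
        _ ≤ γ * ‖vstar - v k‖ + ε := add_le_add h2 h3
    have hsum : ∑ i ∈ range (k+1), γ ^ i = γ * ∑ i ∈ range k, γ ^ i + 1 := by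
      rw [Finset.sum_range_succ', Finset.mul_sum]
      simp [pow_succ, mul_comm]
    have h5 : γ * ‖vstar - v k‖ + ε
        ≤ γ * (γ ^ k * ‖vstar - v 0‖ + ε * ∑ i ∈ range k, γ ^ i) + ε := by
      have := mul_le_mul_of_nonneg_left ih hγ
      linarith
    have h6 : γ * (γ ^ k * ‖vstar - v 0‖ + ε * ∑ i ∈ range k, γ ^ i) + ε
        = γ ^ (k+1) * ‖vstar - v 0‖ + ε * ∑ i ∈ range (k+1), γ ^ i := by
      rw [hsum]; ring
    linarith

lemma vk_eq (hAVI : ∀ k : ℕ, v (k+1) = Topt P r γ (v k) + εf (k+1))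
    (hgreedy : ∀ i : ℕ, Tpol P r γ (πs (i+1)) (v i) = Topt P r γ (v i)) :
    ∀ m k, m ≤ k → v k = Tcomp P r γ πs k m (v (k - m))
      + ∑ i ∈ range m, Gap P γ πs k i (εf (k - i)) := by
  intro m
  induction m with
  | zero => intro k _; simp [Tcomp]
  | succ m ih =>
    intro k hk
    obtain ⟨k, rfl⟩ : ∃ k', k = k' + 1 := ⟨k - 1, (Nat.succ_pred_eq_of_pos (by omega)).symm⟩
    have h1 : v (k+1) = Tpol P r γ (πs (k+1)) (v k) + εf (k+1) := by
      rw [hAVI k, hgreedy k]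
    have h2 := ih k (by omega)
    rw [h1, h2, Tpol_affine, Pap_sum, Finset.smul_sum]
    have hT : Tcomp P r γ πs (k+1) (m+1) (v (k+1-(m+1)))
        = Tpol P r γ (πs (k+1)) (Tcomp P r γ πs k m (v (k - m))) := by
      have : k + 1 - (m+1) = k - m := by omega
      rw [this]; rfl
    rw [hT, Finset.sum_range_succ']
    have hG0 : Gap P γ πs (k+1) 0 (εf (k+1-0)) = εf (k+1) := rfl
    rw [hG0]
    have hGi : ∀ i ∈ range m, γ • Pap P (πs (k+1)) (Gap P γ πs k i (εf (k - i)))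
        = Gap P γ πs (k+1) (i+1) (εf (k+1-(i+1))) := by
      intro i _
      have : k + 1 - (i+1) = k - i := by omega
      rw [this]; rfl
    rw [Finset.sum_congr rfl hGi]
    abel

lemma lower_bound (hP : IsStochastic P) (hγ : 0 ≤ γ)
    (hAVI : ∀ k : ℕ, v (k+1) = Topt P r γ (v k) + εf (k+1))
    (hgreedy : ∀ i : ℕ, Tpol P r γ (πs (i+1)) (v i) = Topt P r γ (v i))
    (hstar : Topt P r γ vstar = vstar) :
    ∀ m k, m ≤ k → ∀ s, Gap P γ πs k m (vstar - v (k - m)) s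
      - (∑ i ∈ range m, Gap P γ πs k i (εf (k - i))) s ≤ vstar s - v k s := by
  intro m
  induction m with
  | zero => intro k _ s; simp [Gap]
  | succ m ih =>
    intro k hk s
    obtain ⟨k, rfl⟩ : ∃ k', k = k' + 1 := ⟨k - 1, (Nat.succ_pred_eq_of_pos (by omega)).symm⟩
    -- key one-step inequality
    have hkey : ∀ t, γ * Pap P (πs (k+1)) (vstar - v k) t - εf (k+1) t ≤ vstar t - v (k+1) t := by
      intro t
      have h1 : v (k+1) t = Tpol P r γ (πs (k+1)) (v k) t + εf (k+1) t := by
        rw [hAVI k, hgreedy k]; rfl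
      have h2 : Tpol P r γ (πs (k+1)) vstar t ≤ vstar t := by
        calc Tpol P r γ (πs (k+1)) vstar t ≤ Topt P r γ vstar t := Tpol_le_Topt _ _ t
          _ = vstar t := by rw [hstar]
      have h3 := Tpol_sub_apply (P := P) (r := r) (γ := γ) (πs (k+1)) vstar (v k) t
      linarith
    -- apply monotone γ Pap to IH
    have hIH : ∀ t, Gap P γ πs k m (vstar - v (k - m)) t
        - (∑ i ∈ range m, Gap P γ πs k i (εf (k - i))) t ≤ (vstar - v k) t := by
      intro t; exact ih k (by omega) t
    have hmono : γ * Pap P (πs (k+1))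
          (Gap P γ πs k m (vstar - v (k - m)) - ∑ i ∈ range m, Gap P γ πs k i (εf (k - i))) s
        ≤ γ * Pap P (πs (k+1)) (vstar - v k) s := by
      refine mul_le_mul_of_nonneg_left ?_ hγ
      exact Pap_mono hP _ (fun t => by simpa using hIH t) s
    rw [Pap_sub, Pap_sum] at hmono
    -- rewrite goal terms
    have hGm : Gap P γ πs (k+1) (m+1) (vstar - v (k+1-(m+1))) s
        = γ * Pap P (πs (k+1)) (Gap P γ πs k m (vstar - v (k - m))) s := by
      have : k + 1 - (m+1) = k - m := by omega
      rw [this]; rfl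
    have hsum : (∑ i ∈ range (m+1), Gap P γ πs (k+1) i (εf (k+1 - i))) s
        = εf (k+1) s + ∑ i ∈ range m, γ * Pap P (πs (k+1)) (Gap P γ πs k i (εf (k - i))) s := by
      rw [Finset.sum_range_succ']
      have hGi : ∀ i ∈ range m, Gap P γ πs (k+1) (i+1) (εf (k+1-(i+1)))
          = γ • Pap P (πs (k+1)) (Gap P γ πs k i (εf (k - i))) := by
        intro i _
        have : k + 1 - (i+1) = k - i := by omega
        rw [this]; rfl
      rw [Finset.sum_congr rfl hGi]
      simp [Finset.sum_apply, add_comm, Gap]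
    rw [hGm, hsum]
    have hkey' := hkey s
    rw [Pi.sub_apply, Finset.sum_apply, mul_sub] at hmono
    have hms : ∑ i ∈ range m, γ * Pap P (πs (k+1)) (Gap P γ πs k i (εf (k - i))) s
        = γ * ∑ i ∈ range m, Pap P (πs (k+1)) (Gap P γ πs k i (εf (k - i))) s :=
      (Finset.mul_sum _ _ _).symm
    rw [hms]
    linarith
end Main

/-- Special case `m = k` of the AVI non-stationary bound, and the resulting asymptotic
`limsup` bound `2γ/(1−γ) ε`. -/
theorem avi_nonstationary_bound_m_eq_k (P : S → A → S → ℝ) (r : S → A → ℝ) (γ : ℝ)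
    (hP : IsStochastic P) (hγ0 : 0 < γ) (hγ1 : γ < 1)
    (v : ℕ → S → ℝ) (εf : ℕ → S → ℝ) (ε : ℝ) (hε : 0 ≤ ε) (πs : ℕ → S → A)
    (hAVI : ∀ k : ℕ, v (k+1) = Topt P r γ (v k) + εf (k+1))
    (herr : ∀ k : ℕ, 1 ≤ k → ‖εf k‖ ≤ ε)
    (hgreedy : ∀ i : ℕ, Tpol P r γ (πs (i+1)) (v i) = Topt P r γ (v i))
    (vstar : S → ℝ) (hstar : Topt P r γ vstar = vstar)
    (vkk : ℕ → S → ℝ) (hfix : ∀ k : ℕ, 1 ≤ k → Tcomp P r γ πs k k (vkk k) = vkk k) :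
    (∀ k : ℕ, 1 ≤ k →
      ‖vstar - vkk k‖ ≤ 2 * (γ / (1 - γ) - γ ^ k / (1 - γ ^ k)) * ε
        + 2 * γ ^ k / (1 - γ ^ k) * ‖vstar - v 0‖) ∧
    Filter.limsup (fun k => ‖vstar - vkk k‖) atTop ≤ 2 * γ / (1 - γ) * ε := by
  have hγ : 0 ≤ γ := le_of_lt hγ0
  set D := ‖vstar - v 0‖ with hD
  have hDnn : 0 ≤ D := norm_nonneg _
  have part1 : ∀ k : ℕ, 1 ≤ k →
      ‖vstar - vkk k‖ ≤ 2 * (γ / (1 - γ) - γ ^ k / (1 - γ ^ k)) * ε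
        + 2 * γ ^ k / (1 - γ ^ k) * D := by
    intro k hk
    obtain ⟨n, rfl⟩ : ∃ n, k = n + 1 := ⟨k - 1, by omega⟩
    set C : ℝ := γ * (γ ^ n * D + ε * ∑ i ∈ range n, γ ^ i)
      + (∑ i ∈ range n, γ ^ (i+1) * ε) + γ ^ (n+1) * D with hC
    -- exact identity E
    have h10 := vk_eq hAVI hgreedy (n+1) (n+1) le_rfl
    rw [Nat.sub_self] at h10
    have hts0 := Tcomp_sub (P := P) (r := r) (γ := γ) (πs := πs) (n+1) (n+1) (v 0) vstar
    have hE : vstar - Tcomp P r γ πs (n+1) (n+1) vstar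
        = (vstar - v (n+1)) + (∑ i ∈ range (n+1), Gap P γ πs (n+1) i (εf (n+1-i)))
          + Gap P γ πs (n+1) (n+1) (v 0 - vstar) := by
      rw [h10, ← hts0]; abel
    -- lower bound: 0 ≤ x s
    have hlow : ∀ s, 0 ≤ (vstar - Tcomp P r γ πs (n+1) (n+1) vstar) s := by
      intro s
      have hlb := lower_bound hP hγ hAVI hgreedy hstar (n+1) (n+1) le_rfl s
      rw [Nat.sub_self] at hlb
      have hneg : Gap P γ πs (n+1) (n+1) (v 0 - vstar)
          = -Gap P γ πs (n+1) (n+1) (vstar - v 0) := by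
        rw [← Gap_neg, neg_sub]
      have := congrFun hE s
      simp only [Pi.add_apply, Pi.sub_apply, hneg, Pi.neg_apply] at this ⊢
      rw [this]
      linarith
    -- sum splitting
    have hSum : (∑ i ∈ range (n+1), Gap P γ πs (n+1) i (εf (n+1-i)))
        = (∑ i ∈ range n, Gap P γ πs (n+1) (i+1) (εf (n-i))) + εf (n+1) := by
      rw [Finset.sum_range_succ']
      congr 1
      refine Finset.sum_congr rfl fun i hi => ?_
      have hix : n + 1 - (i+1) = n - i := by omega
      rw [hix]
    -- upper bound
    have hupper : ∀ s, (vstar - Tcomp P r γ πs (n+1) (n+1) vstar) s ≤ C := by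
      intro s
      have hxe := congrFun hE s
      rw [hSum] at hxe
      have hvs : vstar s - v (n+1) s
          = (Topt P r γ vstar s - Topt P r γ (v n) s) - εf (n+1) s := by
        rw [hAVI n, hstar]; simp only [Pi.add_apply]; ring
      have h1 : Topt P r γ vstar s - Topt P r γ (v n) s ≤ γ * ‖vstar - v n‖ :=
        le_trans (le_abs_self _) (Topt_contract hP hγ vstar (v n) s)
      have h2 : ‖vstar - v n‖ ≤ γ ^ n * D + ε * ∑ i ∈ range n, γ ^ i :=
        dist_bound hP hγ hε hAVI herr hstar n
      have h3 : (∑ i ∈ range n, Gap P γ πs (n+1) (i+1) (εf (n-i))) s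
          ≤ ∑ i ∈ range n, γ ^ (i+1) * ε := by
        rw [Finset.sum_apply]
        refine Finset.sum_le_sum fun i hi => ?_
        have hie : 1 ≤ n - i := by simp at hi; omega
        calc Gap P γ πs (n+1) (i+1) (εf (n-i)) s
            ≤ |Gap P γ πs (n+1) (i+1) (εf (n-i)) s| := le_abs_self _
          _ ≤ γ ^ (i+1) * ‖εf (n-i)‖ := Gap_abs_le hP hγ (i+1) (n+1) _ s
          _ ≤ γ ^ (i+1) * ε := mul_le_mul_of_nonneg_left (herr _ hie) (pow_nonneg hγ _)
      have h4 : Gap P γ πs (n+1) (n+1) (v 0 - vstar) s ≤ γ ^ (n+1) * D := by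
        calc Gap P γ πs (n+1) (n+1) (v 0 - vstar) s
            ≤ |Gap P γ πs (n+1) (n+1) (v 0 - vstar) s| := le_abs_self _
          _ ≤ γ ^ (n+1) * ‖v 0 - vstar‖ := Gap_abs_le hP hγ (n+1) (n+1) _ s
          _ = γ ^ (n+1) * D := by rw [norm_sub_rev]
      have hmul := mul_le_mul_of_nonneg_left h2 hγ
      simp only [Pi.add_apply, Pi.sub_apply] at hxe
      rw [hvs] at hxe
      rw [hC, Pi.sub_apply]
      linarith [hxe, h1, h3, h4]
    have hC0 : 0 ≤ C := le_trans (hlow (Classical.arbitrary S)) (hupper _)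
    have hxnorm : ‖vstar - Tcomp P r γ πs (n+1) (n+1) vstar‖ ≤ C := by
      refine (pi_norm_le_iff_of_nonneg hC0).2 fun s => ?_
      rw [Real.norm_eq_abs, abs_le]
      exact ⟨by linarith [hlow s], hupper s⟩
    -- fixed point decomposition
    have hfixk := hfix (n+1) (by omega)
    have hts := Tcomp_sub (P := P) (r := r) (γ := γ) (πs := πs) (n+1) (n+1) vstar (vkk (n+1))
    rw [hfixk] at hts
    have hdec : vstar - vkk (n+1)
        = (vstar - Tcomp P r γ πs (n+1) (n+1) vstar)
          + Gap P γ πs (n+1) (n+1) (vstar - vkk (n+1)) := by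
      rw [← hts]; abel
    have hBb : ‖vstar - vkk (n+1)‖ ≤ C + γ ^ (n+1) * ‖vstar - vkk (n+1)‖ := by
      calc ‖vstar - vkk (n+1)‖
          = ‖(vstar - Tcomp P r γ πs (n+1) (n+1) vstar)
              + Gap P γ πs (n+1) (n+1) (vstar - vkk (n+1))‖ := by rw [← hdec]
        _ ≤ ‖vstar - Tcomp P r γ πs (n+1) (n+1) vstar‖
              + ‖Gap P γ πs (n+1) (n+1) (vstar - vkk (n+1))‖ := norm_add_le _ _
        _ ≤ C + γ ^ (n+1) * ‖vstar - vkk (n+1)‖ :=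
            add_le_add hxnorm (Gap_norm_le hP hγ (n+1) (n+1) _)
    have hk1 : γ ^ (n+1) < 1 := pow_lt_one₀ hγ hγ1 (by omega)
    have hkpos : 0 < 1 - γ ^ (n+1) := by linarith
    have h1γ : 0 < 1 - γ := by linarith
    have hBC : ‖vstar - vkk (n+1)‖ ≤ C / (1 - γ ^ (n+1)) := by
      rw [le_div_iff₀ hkpos]; nlinarith [hBb]
    refine hBC.trans (le_of_eq ?_)
    have hgeo : ∑ i ∈ range n, γ ^ i = (γ ^ n - 1) / (γ - 1) :=
      geom_sum_eq (ne_of_lt hγ1) n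
    have hsum2 : ∑ i ∈ range n, γ ^ (i+1) * ε = ε * γ * ∑ i ∈ range n, γ ^ i := by
      rw [Finset.mul_sum]
      exact Finset.sum_congr rfl fun i _ => by ring
    rw [hC, hsum2, hgeo]
    have hne1 : γ - 1 ≠ 0 := by linarith
    have hne2 : (1:ℝ) - γ ≠ 0 := by linarith
    have hne3 : (1:ℝ) - γ ^ (n+1) ≠ 0 := ne_of_gt hkpos
    field_simp
    ring
  refine ⟨part1, ?_⟩
  -- limsup part
  have h0 : Tendsto (fun k : ℕ => γ ^ k) atTop (𝓝 0) :=
    tendsto_pow_atTop_nhds_zero_of_lt_one hγ hγ1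
  have hx : Tendsto (fun k : ℕ => γ ^ k / (1 - γ ^ k)) atTop (𝓝 0) := by
    have := Tendsto.div h0 (tendsto_const_nhds.sub h0) (by norm_num : (1:ℝ) - 0 ≠ 0)
    rw [sub_zero, zero_div] at this; exact this
  have hlim : Tendsto (fun k : ℕ => 2 * (γ / (1 - γ) - γ ^ k / (1 - γ ^ k)) * ε
      + 2 * γ ^ k / (1 - γ ^ k) * D) atTop (𝓝 (2 * γ / (1 - γ) * ε)) := by
    have hfeq : (fun k : ℕ => 2 * (γ / (1 - γ) - γ ^ k / (1 - γ ^ k)) * ε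
        + 2 * γ ^ k / (1 - γ ^ k) * D)
        = fun k : ℕ => 2 * (γ / (1 - γ) - γ ^ k / (1 - γ ^ k)) * ε
          + 2 * (γ ^ k / (1 - γ ^ k)) * D := by
      funext k; ring
    have haeq : 2 * γ / (1 - γ) * ε = 2 * (γ / (1 - γ) - 0) * ε + 2 * 0 * D := by ring
    rw [hfeq, haeq]
    exact ((((tendsto_const_nhds).sub hx).const_mul 2).mul_const ε).add
      ((hx.const_mul 2).mul_const D)
  have hev : ∀ᶠ k in atTop, ‖vstar - vkk k‖
      ≤ 2 * (γ / (1 - γ) - γ ^ k / (1 - γ ^ k)) * ε + 2 * γ ^ k / (1 - γ ^ k) * D :=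
    eventually_atTop.2 ⟨1, part1⟩
  calc Filter.limsup (fun k => ‖vstar - vkk k‖) atTop
      ≤ Filter.limsup (fun k : ℕ => 2 * (γ / (1 - γ) - γ ^ k / (1 - γ ^ k)) * ε
          + 2 * γ ^ k / (1 - γ ^ k) * D) atTop := by
        refine Filter.limsup_le_limsup hev ?_ ?_
        · refine Filter.IsBoundedUnder.isCoboundedUnder_le ?_
          exact isBoundedUnder_of ⟨0, fun k => norm_nonneg _⟩
        · exact hlim.isBoundedUnder_le
    _ = 2 * γ / (1 - γ) * ε := hlim.limsup_eq
end

section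
/- API with growing period, full bound: for all k ≥ 1, ‖v_* − v_{π_{k,k}}‖_∞ ≤ (2(γ − γ^k)/(1 − γ)) ε + γ^{k−1} ‖v_* − v_{π_{1,1}}‖_∞ + 2(k−1) γ^k V_max. -/
open Finset Filter

variable {S A : Type*} [Fintype S] [Nonempty S] [DecidableEq S] [Fintype A] [Nonempty A]

section Helpers

variable (P : S → A → S → ℝ) (r : S → A → ℝ) (γ : ℝ) (πs : ℕ → S → A)

lemma sumP_abs_le (hP : IsStochastic P) (s : S) (a : A) (v : S → ℝ) (c : ℝ)
    (hv : ∀ s', |v s'| ≤ c) : |∑ s', P s a s' * v s'| ≤ c := by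
  calc |∑ s', P s a s' * v s'| ≤ ∑ s', |P s a s' * v s'| := Finset.abs_sum_le_sum_abs _ _
    _ ≤ ∑ s', P s a s' * c := by
        refine Finset.sum_le_sum fun s' _ => ?_
        rw [abs_mul, abs_of_nonneg (hP.1 s a s')]
        exact mul_le_mul_of_nonneg_left (hv s') (hP.1 s a s')
    _ = c := by rw [← Finset.sum_mul, hP.2 s a, one_mul]

lemma tpol_sub (π : S → A) (v w : S → ℝ) (s : S) :
    Tpol P r γ π v s - Tpol P r γ π w s
      = γ * ∑ s', P s (π s) s' * (v s' - w s') := by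
  simp only [Tpol, mul_sub, Finset.sum_sub_distrib]
  ring

lemma tcomp_unfold (k m : ℕ) (v : S → ℝ) :
    Tcomp P r γ πs (k+1) (m+1) v = Tpol P r γ (πs (k+1)) (Tcomp P r γ πs k m v) := rfl

lemma tcomp_contract (hP : IsStochastic P) (hγ : 0 ≤ γ) :
    ∀ (m k : ℕ) (v w : S → ℝ) (s : S),
      |Tcomp P r γ πs k m v s - Tcomp P r γ πs k m w s| ≤ γ ^ m * ‖v - w‖ := by
  intro m
  induction m with
  | zero =>
      intro k v w s
      simpa [Tcomp, Real.norm_eq_abs] using norm_le_pi_norm (v - w) s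
  | succ m ih =>
      intro k v w s
      have hd := tpol_sub P r γ (πs k) (Tcomp P r γ πs (k-1) m v)
        (Tcomp P r γ πs (k-1) m w) s
      have : Tcomp P r γ πs k (m+1) v s - Tcomp P r γ πs k (m+1) w s
          = γ * ∑ s', P s (πs k s) s'
              * (Tcomp P r γ πs (k-1) m v s' - Tcomp P r γ πs (k-1) m w s') := by
        simpa [Tcomp] using hd
      rw [this, abs_mul, abs_of_nonneg hγ]
      have hb := sumP_abs_le P hP s (πs k s)
        (fun t => Tcomp P r γ πs (k-1) m v t - Tcomp P r γ πs (k-1) m w t)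
        (γ ^ m * ‖v - w‖) (fun t => ih (k-1) v w t)
      calc γ * |∑ s', P s (πs k s) s'
            * (Tcomp P r γ πs (k-1) m v s' - Tcomp P r γ πs (k-1) m w s')|
          ≤ γ * (γ ^ m * ‖v - w‖) := mul_le_mul_of_nonneg_left hb hγ
        _ = γ ^ (m+1) * ‖v - w‖ := by ring

lemma tpol_mono (hP : IsStochastic P) (hγ : 0 ≤ γ) (π : S → A) {v w : S → ℝ}
    (h : ∀ s, v s ≤ w s) (s : S) : Tpol P r γ π v s ≤ Tpol P r γ π w s := by
  simp only [Tpol]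
  refine add_le_add_right (mul_le_mul_of_nonneg_left ?_ hγ) _
  exact Finset.sum_le_sum fun s' _ => mul_le_mul_of_nonneg_left (h s') (hP.1 _ _ _)

lemma tpol_le_topt (π : S → A) (v : S → ℝ) (s : S) :
    Tpol P r γ π v s ≤ Topt P r γ v s :=
  Finset.le_sup' (fun a => r s a + γ * ∑ s', P s a s' * v s') (Finset.mem_univ (π s))

lemma tcomp_mono (hP : IsStochastic P) (hγ : 0 ≤ γ) :
    ∀ (m k : ℕ) {v w : S → ℝ}, (∀ s, v s ≤ w s) →
      ∀ s, Tcomp P r γ πs k m v s ≤ Tcomp P r γ πs k m w s := by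
  intro m
  induction m with
  | zero => intro k v w h s; simpa [Tcomp] using h s
  | succ m ih =>
      intro k v w h s
      simp only [Tcomp]
      exact tpol_mono P r γ hP hγ (πs k) (fun t => ih (k-1) h t) s

lemma tcomp_le_fix (hP : IsStochastic P) (hγ : 0 ≤ γ) {v : S → ℝ}
    (hv : Topt P r γ v = v) :
    ∀ (m k : ℕ) (s : S), Tcomp P r γ πs k m v s ≤ v s := by
  intro m
  induction m with
  | zero => intro k s; simp [Tcomp]
  | succ m ih =>
      intro k s
      simp only [Tcomp]
      calc Tpol P r γ (πs k) (Tcomp P r γ πs (k-1) m v) s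
          ≤ Tpol P r γ (πs k) v s := tpol_mono P r γ hP hγ _ (fun t => ih (k-1) t) s
        _ ≤ Topt P r γ v s := tpol_le_topt P r γ _ v s
        _ = v s := congrFun hv s

lemma topt_sub_le (hP : IsStochastic P) (hγ : 0 ≤ γ) (v w : S → ℝ) (s : S) :
    Topt P r γ v s - Topt P r γ w s ≤ γ * ‖v - w‖ := by
  rw [sub_le_iff_le_add]
  simp only [Topt]
  apply Finset.sup'_le
  intro a _
  have hb : |∑ s', P s a s' * (v s' - w s')| ≤ ‖v - w‖ :=
    sumP_abs_le P hP s a _ _ (fun t => by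
      simpa [Real.norm_eq_abs] using norm_le_pi_norm (v - w) t)
  have hsplit : ∑ s', P s a s' * v s'
      = ∑ s', P s a s' * w s' + ∑ s', P s a s' * (v s' - w s') := by
    rw [← Finset.sum_add_distrib]; congr 1; ext s'; ring
  have h1 : ∑ s', P s a s' * v s' ≤ ∑ s', P s a s' * w s' + ‖v - w‖ := by
    rw [hsplit]; exact add_le_add_right (le_trans (le_abs_self _) hb) _
  have h2 : r s a + γ * ∑ s', P s a s' * w s'
      ≤ univ.sup' univ_nonempty (fun a => r s a + γ * ∑ s', P s a s' * w s') :=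
    Finset.le_sup' (fun a => r s a + γ * ∑ s', P s a s' * w s') (Finset.mem_univ a)
  have h3 : γ * ∑ s', P s a s' * v s'
      ≤ γ * ∑ s', P s a s' * w s' + γ * ‖v - w‖ := by
    calc γ * ∑ s', P s a s' * v s' ≤ γ * (∑ s', P s a s' * w s' + ‖v - w‖) :=
          mul_le_mul_of_nonneg_left h1 hγ
      _ = γ * ∑ s', P s a s' * w s' + γ * ‖v - w‖ := by ring
  linarith

lemma vkk_le_vstar (hP : IsStochastic P) (hγ0 : 0 < γ) (hγ1 : γ < 1)
    (vkk : ℕ → S → ℝ)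
    (hfix : ∀ k : ℕ, 1 ≤ k → Tcomp P r γ πs k k (vkk k) = vkk k)
    (vstar : S → ℝ) (hstar : Topt P r γ vstar = vstar) :
    ∀ k : ℕ, 1 ≤ k → ∀ s, vkk k s ≤ vstar s := by
  intro k hk s
  set C : (S → ℝ) → (S → ℝ) := Tcomp P r γ πs k k with hC
  have hCfix : C (vkk k) = vkk k := hfix k hk
  have hle_star : ∀ n, ∀ t, C^[n] vstar t ≤ vstar t := by
    intro n
    induction n with
    | zero => intro t; simp
    | succ n ihn =>
        intro t
        rw [Function.iterate_succ_apply']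
        calc C (C^[n] vstar) t ≤ C vstar t :=
              tcomp_mono P r γ πs hP hγ0.le k k ihn t
          _ ≤ vstar t := tcomp_le_fix P r γ πs hP hγ0.le hstar k k t
  have hcontract : ∀ n, ∀ t, |C^[n] vstar t - vkk k t| ≤ (γ ^ k) ^ n * ‖vstar - vkk k‖ := by
    intro n
    induction n with
    | zero =>
        intro t
        simpa [Real.norm_eq_abs] using norm_le_pi_norm (vstar - vkk k) t
    | succ n ihn =>
        intro t
        rw [Function.iterate_succ_apply']
        have hnorm : ‖C^[n] vstar - vkk k‖ ≤ (γ ^ k) ^ n * ‖vstar - vkk k‖ := by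
          rw [pi_norm_le_iff_of_nonneg (by positivity)]
          intro t
          simpa [Real.norm_eq_abs] using ihn t
        have h1 : |C (C^[n] vstar) t - C (vkk k) t| ≤ γ ^ k * ‖C^[n] vstar - vkk k‖ :=
          tcomp_contract P r γ πs hP hγ0.le k k (C^[n] vstar) (vkk k) t
        rw [hCfix] at h1
        calc |C (C^[n] vstar) t - vkk k t| ≤ γ ^ k * ‖C^[n] vstar - vkk k‖ := h1
          _ ≤ γ ^ k * ((γ ^ k) ^ n * ‖vstar - vkk k‖) :=
              mul_le_mul_of_nonneg_left hnorm (by positivity)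
          _ = (γ ^ k) ^ (n+1) * ‖vstar - vkk k‖ := by ring
  have hbd : ∀ n, vkk k s - vstar s ≤ (γ ^ k) ^ n * ‖vstar - vkk k‖ := by
    intro n
    have h1 := (abs_le.mp (hcontract n s)).1
    have h2 := hle_star n s
    linarith
  have htend : Tendsto (fun n => (γ ^ k) ^ n * ‖vstar - vkk k‖) atTop (nhds 0) := by
    have h0 : |γ ^ k| < 1 := by
      rw [abs_of_pos (pow_pos hγ0 k)]
      exact pow_lt_one₀ hγ0.le hγ1 (by omega)
    simpa using (tendsto_pow_atTop_nhds_zero_of_abs_lt_one h0).mul_const ‖vstar - vkk k‖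
  have := ge_of_tendsto' htend hbd
  linarith

lemma api_step (hP : IsStochastic P) (hγ0 : 0 < γ) (hγ1 : γ < 1)
    (Vmax ε : ℝ) (hVm : 0 ≤ Vmax)
    (vkk : ℕ → S → ℝ) (εf : ℕ → S → ℝ)
    (hfix : ∀ k : ℕ, 1 ≤ k → Tcomp P r γ πs k k (vkk k) = vkk k)
    (hgreedy : ∀ k : ℕ, 1 ≤ k →
      Tpol P r γ (πs (k+1)) (vkk k + εf k) = Topt P r γ (vkk k + εf k))
    (herr : ∀ k : ℕ, ‖εf k‖ ≤ ε) (hε : 0 ≤ ε)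
    (hvb : ∀ k : ℕ, 1 ≤ k → ‖vkk k‖ ≤ Vmax)
    (vstar : S → ℝ) (hstar : Topt P r γ vstar = vstar)
    (k : ℕ) (hk : 1 ≤ k) :
    ‖vstar - vkk (k+1)‖ ≤ γ * ‖vstar - vkk k‖ + 2 * γ * ε + 2 * γ ^ (k+1) * Vmax := by
  have hpos := vkk_le_vstar P r γ πs hP hγ0 hγ1 vkk hfix vstar hstar (k+1) (by omega)
  have h0 : 0 ≤ γ * ‖vstar - vkk k‖ + 2 * γ * ε + 2 * γ ^ (k+1) * Vmax := by
    have h1 : 0 ≤ γ * ‖vstar - vkk k‖ := mul_nonneg hγ0.le (norm_nonneg _)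
    have h2 : 0 ≤ 2 * γ * ε := mul_nonneg (by linarith) hε
    have h3 : 0 ≤ 2 * γ ^ (k+1) * Vmax :=
      mul_nonneg (by positivity) hVm
    linarith
  rw [pi_norm_le_iff_of_nonneg h0]
  intro s
  set u : S → ℝ := vkk k + εf k with hu
  set W : S → ℝ := Tcomp P r γ πs k k (vkk (k+1)) with hW
  have hg : Tpol P r γ (πs (k+1)) u s = Topt P r γ u s := congrFun (hgreedy k hk) s
  have hWfix : vkk (k+1) s = Tpol P r γ (πs (k+1)) W s := by
    have h := hfix (k+1) (by omega)
    rw [tcomp_unfold] at h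
    exact (congrFun h s).symm
  have key : vstar s - vkk (k+1) s
      = (Topt P r γ vstar s - Topt P r γ u s)
        + (Tpol P r γ (πs (k+1)) u s - Tpol P r γ (πs (k+1)) W s) := by
    have e1 : vstar s = Topt P r γ vstar s := (congrFun hstar s).symm
    rw [hWfix]
    rw [e1, hg]
    ring
  -- bound A
  have hnA : ‖vstar - u‖ ≤ ‖vstar - vkk k‖ + ε := by
    have he : vstar - u = (vstar - vkk k) - εf k := by
      ext t; simp [hu]; ring
    rw [he]
    exact (norm_sub_le _ _).trans (by linarith [herr k])
  have hA : Topt P r γ vstar s - Topt P r γ u s ≤ γ * ‖vstar - vkk k‖ + γ * ε := by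
    calc Topt P r γ vstar s - Topt P r γ u s ≤ γ * ‖vstar - u‖ :=
          topt_sub_le P r γ hP hγ0.le vstar u s
      _ ≤ γ * (‖vstar - vkk k‖ + ε) := mul_le_mul_of_nonneg_left hnA hγ0.le
      _ = γ * ‖vstar - vkk k‖ + γ * ε := by ring
  -- bound B
  have h2V : ‖vkk k - vkk (k+1)‖ ≤ 2 * Vmax :=
    (norm_sub_le _ _).trans (by linarith [hvb k hk, hvb (k+1) (by omega)])
  have hv : ∀ t, |u t - W t| ≤ ε + γ ^ k * (2 * Vmax) := by
    intro t
    have h1 : |vkk k t - W t| ≤ γ ^ k * ‖vkk k - vkk (k+1)‖ := by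
      have h := tcomp_contract P r γ πs hP hγ0.le k k (vkk k) (vkk (k+1)) t
      rwa [congrFun (hfix k hk) t] at h
    have h1' : |vkk k t - W t| ≤ γ ^ k * (2 * Vmax) :=
      h1.trans (mul_le_mul_of_nonneg_left h2V (by positivity))
    have h3 : |εf k t| ≤ ε :=
      le_trans (by simpa [Real.norm_eq_abs] using norm_le_pi_norm (εf k) t) (herr k)
    have hut : u t = vkk k t + εf k t := by simp [hu]
    calc |u t - W t| = |(vkk k t - W t) + εf k t| := by rw [hut]; ring_nf
      _ ≤ |vkk k t - W t| + |εf k t| := abs_add_le _ _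
      _ ≤ ε + γ ^ k * (2 * Vmax) := by linarith
  have hB : Tpol P r γ (πs (k+1)) u s - Tpol P r γ (πs (k+1)) W s
      ≤ γ * ε + 2 * γ ^ (k+1) * Vmax := by
    rw [tpol_sub]
    calc γ * ∑ s', P s (πs (k+1) s) s' * (u s' - W s')
        ≤ γ * (ε + γ ^ k * (2 * Vmax)) :=
          mul_le_mul_of_nonneg_left
            (le_trans (le_abs_self _)
              (sumP_abs_le P hP s (πs (k+1) s) (fun t => u t - W t) _ hv)) hγ0.le
      _ = γ * ε + 2 * γ ^ (k+1) * Vmax := by ring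
  have habs : ‖(vstar - vkk (k+1)) s‖ = vstar s - vkk (k+1) s := by
    simp only [Pi.sub_apply, Real.norm_eq_abs]
    exact abs_of_nonneg (sub_nonneg.2 (hpos s))
  rw [habs]
  linarith

end Helpers

/-- API with growing period, full bound:
`‖v_* − v_{π_{k,k}}‖ ≤ 2(γ − γ^k)/(1 − γ) ε + γ^{k−1} ‖v_* − v_{π_{1,1}}‖ + 2(k−1) γ^k V_max`. -/
theorem api_growing_period_bound (P : S → A → S → ℝ) (r : S → A → ℝ) (γ : ℝ)
    (hP : IsStochastic P) (hγ0 : 0 < γ) (hγ1 : γ < 1)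
    (Rmax Vmax ε : ℝ) (hr : ∀ s a, |r s a| ≤ Rmax) (hV : Vmax = Rmax / (1 - γ))
    (πs : ℕ → S → A) (vkk : ℕ → S → ℝ) (εf : ℕ → S → ℝ)
    (hfix : ∀ k : ℕ, 1 ≤ k → Tcomp P r γ πs k k (vkk k) = vkk k)
    (hgreedy : ∀ k : ℕ, 1 ≤ k →
      Tpol P r γ (πs (k+1)) (vkk k + εf k) = Topt P r γ (vkk k + εf k))
    (herr : ∀ k : ℕ, ‖εf k‖ ≤ ε) (hε : 0 ≤ ε)
    (hvb : ∀ k : ℕ, 1 ≤ k → ‖vkk k‖ ≤ Vmax)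
    (vstar : S → ℝ) (hstar : Topt P r γ vstar = vstar) (hstarb : ‖vstar‖ ≤ Vmax) :
    ∀ k : ℕ, 1 ≤ k →
      ‖vstar - vkk k‖ ≤ 2 * (γ - γ ^ k) / (1 - γ) * ε
        + γ ^ (k-1) * ‖vstar - vkk 1‖ + 2 * ((k : ℝ) - 1) * γ ^ k * Vmax := by
  have hVm : 0 ≤ Vmax := by
    obtain ⟨s0⟩ := (inferInstance : Nonempty S)
    obtain ⟨a0⟩ := (inferInstance : Nonempty A)
    have hR : 0 ≤ Rmax := (abs_nonneg _).trans (hr s0 a0)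
    rw [hV]; exact div_nonneg hR (by linarith)
  refine Nat.le_induction ?_ ?_
  · norm_num
  · intro k hk IH
    obtain ⟨j, rfl⟩ : ∃ j, k = j + 1 := ⟨k - 1, (Nat.succ_pred_eq_of_pos hk).symm⟩
    have hstep := api_step P r γ πs hP hγ0 hγ1 Vmax ε hVm vkk εf hfix hgreedy herr hε hvb
      vstar hstar (j+1) (by omega)
    simp only [Nat.add_sub_cancel] at IH ⊢
    push_cast at IH ⊢
    have h1γ : (1:ℝ) - γ ≠ 0 := by linarith
    calc ‖vstar - vkk (j+1+1)‖
        ≤ γ * ‖vstar - vkk (j+1)‖ + 2 * γ * ε + 2 * γ ^ (j+1+1) * Vmax := hstep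
      _ ≤ γ * (2 * (γ - γ ^ (j+1)) / (1 - γ) * ε + γ ^ j * ‖vstar - vkk 1‖
            + 2 * ((j:ℝ) + 1 - 1) * γ ^ (j+1) * Vmax) + 2 * γ * ε + 2 * γ ^ (j+1+1) * Vmax := by
          have := mul_le_mul_of_nonneg_left IH hγ0.le
          linarith
      _ = 2 * (γ - γ ^ (j+1+1)) / (1 - γ) * ε + γ ^ (j+1) * ‖vstar - vkk 1‖
            + 2 * ((j:ℝ) + 1 + 1 - 1) * γ ^ (j+1+1) * Vmax := by
          field_simp
          ring
end

section
/- Approximate policy improvement for fixed-period API: letting π_{k+1,m} be the periodic policy cycling through π_{k+1}, π_k, …, π_{k+2−m} and π'_{k,m} the periodic policy cycling through π_{k−m+1}, π_k, …, π_{k+2−m}, one has v_{π_{k+1,m}} ≥ v_{π'_{k,m}} − (2γ/(1 − γ^m)) ε (pointwise). -/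
open Finset Filter

variable {S A : Type*} [Fintype S] [Nonempty S] [DecidableEq S] [Fintype A] [Nonempty A]

section aux
variable (P : S → A → S → ℝ) (r : S → A → ℝ) (γ : ℝ)

lemma Tpol_mono (hP : IsStochastic P) (hγ : 0 ≤ γ) (π : S → A) {v w : S → ℝ}
    (h : ∀ s, v s ≤ w s) : ∀ s, Tpol P r γ π v s ≤ Tpol P r γ π w s := by
  intro s
  apply add_le_add (le_refl _)
  apply mul_le_mul_of_nonneg_left _ hγ
  exact Finset.sum_le_sum fun s' _ => mul_le_mul_of_nonneg_left (h s') (hP.1 _ _ _)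

lemma Tpol_shift (hP : IsStochastic P) (π : S → A) (v : S → ℝ) (c : ℝ) :
    Tpol P r γ π (fun s => v s - c) = fun s => Tpol P r γ π v s - γ * c := by
  funext s
  unfold Tpol
  have h1 : ∑ s', P s (π s) s' * (v s' - c)
      = (∑ s', P s (π s) s' * v s') - (∑ s', P s (π s) s') * c := by
    rw [Finset.sum_mul, ← Finset.sum_sub_distrib]
    exact Finset.sum_congr rfl fun s' _ => by ring
  rw [h1, hP.2 s (π s)]
  ring

lemma Tcomp_mono (hP : IsStochastic P) (hγ : 0 ≤ γ) (πs : ℕ → S → A) :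
    ∀ (m k : ℕ) {v w : S → ℝ}, (∀ s, v s ≤ w s) →
      ∀ s, Tcomp P r γ πs k m v s ≤ Tcomp P r γ πs k m w s
  | 0, _, _, _, h, s => h s
  | m+1, k, v, w, h, s =>
    Tpol_mono P r γ hP hγ (πs k) (Tcomp_mono hP hγ πs m (k-1) h) s

lemma Tcomp_shift (hP : IsStochastic P) (πs : ℕ → S → A) :
    ∀ (m k : ℕ) (v : S → ℝ) (c : ℝ),
      Tcomp P r γ πs k m (fun s => v s - c) = fun s => Tcomp P r γ πs k m v s - γ ^ m * c
  | 0, k, v, c => by simp [Tcomp]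
  | m+1, k, v, c => by
    show Tpol P r γ (πs k) (Tcomp P r γ πs (k-1) m (fun s => v s - c)) = _
    rw [Tcomp_shift hP πs m (k-1) v c, Tpol_shift P r γ hP]
    funext s
    show Tpol P r γ (πs k) (Tcomp P r γ πs (k-1) m v) s - γ * (γ ^ m * c) = _
    rw [show Tcomp P r γ πs k (m+1) v = Tpol P r γ (πs k) (Tcomp P r γ πs (k-1) m v) from rfl]
    ring

lemma Tcomp_assoc (πs : ℕ → S → A) : ∀ (n k : ℕ) (v : S → ℝ),
    Tcomp P r γ πs k (n+1) v = Tcomp P r γ πs k n (Tpol P r γ (πs (k-n)) v)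
  | 0, k, v => by simp [Tcomp]
  | n+1, k, v => by
    show Tpol P r γ (πs k) (Tcomp P r γ πs (k-1) (n+1) v) = _
    rw [Tcomp_assoc πs n (k-1) v]
    have : k - 1 - n = k - (n+1) := by omega
    rw [this]
    rfl

lemma Tpol_add_err (hP : IsStochastic P) (hγ : 0 ≤ γ) (π : S → A) (v εk : S → ℝ) (ε : ℝ)
    (hb : ∀ s, |εk s| ≤ ε) (s : S) :
    |Tpol P r γ π (v + εk) s - Tpol P r γ π v s| ≤ γ * ε := by
  have h1 : Tpol P r γ π (v + εk) s - Tpol P r γ π v s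
      = γ * ∑ s', P s (π s) s' * εk s' := by
    unfold Tpol
    simp only [Pi.add_apply, mul_add, Finset.sum_add_distrib]
    ring
  rw [h1, abs_mul, abs_of_nonneg hγ]
  apply mul_le_mul_of_nonneg_left _ hγ
  calc |∑ s', P s (π s) s' * εk s'| ≤ ∑ s', |P s (π s) s' * εk s'| :=
        Finset.abs_sum_le_sum_abs _ _
    _ ≤ ∑ s', P s (π s) s' * ε := by
        apply Finset.sum_le_sum
        intro s' _
        rw [abs_mul, abs_of_nonneg (hP.1 _ _ _)]
        exact mul_le_mul_of_nonneg_left (hb s') (hP.1 _ _ _)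
    _ = ε := by rw [← Finset.sum_mul, hP.2 s (π s), one_mul]

end aux

/-- Approximate policy improvement for fixed-period API:
`v_{π_{k+1,m}} ≥ v_{π'_{k,m}} − (2γ/(1 − γ^m)) ε` pointwise, where
`v_{π'_{k,m}} = T_{π_{k−m+1}} v_{π_{k,m}}`. -/
theorem api_fixed_period_policy_improvement (P : S → A → S → ℝ) (r : S → A → ℝ) (γ : ℝ)
    (hP : IsStochastic P) (hγ0 : 0 < γ) (hγ1 : γ < 1)
    (πs : ℕ → S → A) (k m : ℕ) (hm : 1 ≤ m) (hk : m ≤ k)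
    (vkm vk1m εk : S → ℝ) (ε : ℝ) (hε : 0 ≤ ε)
    (hfix : Tcomp P r γ πs k m vkm = vkm)
    (hfix' : Tcomp P r γ πs (k+1) m vk1m = vk1m)
    (hgreedy : Tpol P r γ (πs (k+1)) (vkm + εk) = Topt P r γ (vkm + εk))
    (herr : ‖εk‖ ≤ ε) :
    ∀ s, Tpol P r γ (πs (k - m + 1)) vkm s - 2 * γ / (1 - γ ^ m) * ε ≤ vk1m s := by
  obtain ⟨m', rfl⟩ : ∃ m', m = m' + 1 := ⟨m - 1, by omega⟩
  set π' : S → A := πs (k - (m' + 1) + 1) with hπ'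
  set v' : S → ℝ := Tpol P r γ π' vkm with hv'
  -- vkm = Tcomp k m' v'
  have hkm : Tcomp P r γ πs k m' v' = vkm := by
    have h := Tcomp_assoc P r γ πs m' k vkm
    have hidx : k - m' = k - (m' + 1) + 1 := by omega
    rw [hidx] at h
    rw [← hfix, h]
  have hk1 : Tpol P r γ (πs (k+1)) (Tcomp P r γ πs k m' vk1m) = vk1m := by
    have : Tcomp P r γ πs (k+1) (m'+1) vk1m
        = Tpol P r γ (πs (k+1)) (Tcomp P r γ πs k m' vk1m) := by
      show Tpol P r γ (πs (k+1)) (Tcomp P r γ πs (k+1-1) m' vk1m) = _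
      norm_num
    rw [← this, hfix']
  have hb : ∀ s, |εk s| ≤ ε := fun s => le_trans (norm_le_pi_norm εk s) herr
  -- greedy bound
  have hgb : ∀ s, v' s - 2 * γ * ε ≤ Tpol P r γ (πs (k+1)) vkm s := by
    intro s
    have h1 := Tpol_add_err P r γ hP hγ0.le (πs (k+1)) vkm εk ε hb s
    have h2 := Tpol_add_err P r γ hP hγ0.le π' vkm εk ε hb s
    have h3 : Tpol P r γ π' (vkm + εk) s ≤ Tpol P r γ (πs (k+1)) (vkm + εk) s := by
      rw [hgreedy]
      exact Finset.le_sup' (fun a => r s a + γ * ∑ s', P s a s' * (vkm + εk) s')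
        (Finset.mem_univ (π' s))
    have h1' := abs_le.1 h1
    have h2' := abs_le.1 h2
    rw [hv']
    linarith [h1'.1, h2'.2]
  -- the improvement step
  have step : ∀ δ : ℝ, (∀ s, v' s - δ ≤ vk1m s) →
      ∀ s, v' s - (2 * γ * ε + γ ^ (m' + 1) * δ) ≤ vk1m s := by
    intro δ h s
    have h1 : ∀ t, Tcomp P r γ πs k m' (fun u => v' u - δ) t ≤ Tcomp P r γ πs k m' vk1m t :=
      Tcomp_mono P r γ hP hγ0.le πs m' k h
    rw [Tcomp_shift P r γ hP πs m' k v' δ] at h1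
    have h2 : ∀ t, Tpol P r γ (πs (k+1)) (fun u => vkm u - γ ^ m' * δ) t ≤ vk1m t := by
      intro t
      rw [← hk1]
      refine Tpol_mono P r γ hP hγ0.le (πs (k+1)) (fun u => ?_) t
      have := h1 u
      rw [hkm] at this
      exact this
    rw [Tpol_shift P r γ hP] at h2
    have h3 : Tpol P r γ (πs (k+1)) vkm s - γ * (γ ^ m' * δ) ≤ vk1m s := h2 s
    have h4 := hgb s
    have h5 : γ * (γ ^ m' * δ) = γ ^ (m' + 1) * δ := by ring
    linarith [h3, h4, h5]
  -- iterate
  have hγm : γ ^ (m' + 1) < 1 := pow_lt_one₀ hγ0.le hγ1 (by omega)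
  have hγm0 : 0 < γ ^ (m' + 1) := pow_pos hγ0 _
  set c : ℝ := 2 * γ / (1 - γ ^ (m' + 1)) * ε with hc_def
  have hden : 0 < 1 - γ ^ (m' + 1) := by linarith
  have hc0 : 0 ≤ c := by positivity
  have hc : 2 * γ * ε + γ ^ (m' + 1) * c = c := by
    rw [hc_def]
    field_simp
    ring
  set δ₀ : ℝ := ‖v' - vk1m‖ with hδ₀
  have hbase : ∀ s, v' s - δ₀ ≤ vk1m s := by
    intro s
    have h := le_trans (le_abs_self ((v' - vk1m) s)) (norm_le_pi_norm (v' - vk1m) s)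
    simp only [Pi.sub_apply] at h
    linarith
  have iter : ∀ n : ℕ, ∀ s, v' s - (c + (γ ^ (m' + 1)) ^ n * δ₀) ≤ vk1m s := by
    intro n
    induction n with
    | zero => intro s; have := hbase s; simp only [pow_zero, one_mul]; linarith
    | succ n ih =>
      intro s
      have h := step (c + (γ ^ (m' + 1)) ^ n * δ₀) ih s
      have heq : 2 * γ * ε + γ ^ (m' + 1) * (c + (γ ^ (m' + 1)) ^ n * δ₀)
          = c + (γ ^ (m' + 1)) ^ (n + 1) * δ₀ := by
        calc 2 * γ * ε + γ ^ (m' + 1) * (c + (γ ^ (m' + 1)) ^ n * δ₀)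
            = (2 * γ * ε + γ ^ (m' + 1) * c) + (γ ^ (m' + 1)) ^ (n + 1) * δ₀ := by ring
          _ = c + (γ ^ (m' + 1)) ^ (n + 1) * δ₀ := by rw [hc]
      linarith [h, heq]
  intro s
  have hlim : Filter.Tendsto (fun n : ℕ => v' s - (c + (γ ^ (m' + 1)) ^ n * δ₀))
      Filter.atTop (nhds (v' s - (c + 0 * δ₀))) := by
    apply Filter.Tendsto.const_sub
    apply Filter.Tendsto.const_add
    exact (tendsto_pow_atTop_nhds_zero_of_lt_one hγm0.le hγm).mul_const δ₀
  have := le_of_tendsto hlim (Filter.Eventually.of_forall (fun n => iter n s))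
  simp only [zero_mul, add_zero] at this
  rw [hv', hπ'] at this
  convert this using 2
end

section
/- One-step contraction for fixed-period API: under the approximate policy improvement lemma, ‖v_* − v_{π_{k+1,m}}‖_∞ ≤ γ ‖v_* − v_{π_{k,m}}‖_∞ + (2γ/(1 − γ^m)) ε. -/
open Finset Filter

variable {S A : Type*} [Fintype S] [Nonempty S] [DecidableEq S] [Fintype A] [Nonempty A]

set_option linter.unusedSectionVars false

lemma tpol_shift {P : S → A → S → ℝ} {r : S → A → ℝ} {γ : ℝ}
    (hP : IsStochastic P) (hγ : 0 ≤ γ) (π : S → A) {v w : S → ℝ} {c : ℝ}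
    (h : ∀ s, v s ≤ w s + c) : ∀ s, Tpol P r γ π v s ≤ Tpol P r γ π w s + γ * c := by
  intro s
  simp only [Tpol]
  have h1 : ∑ s', P s (π s) s' * v s' ≤ ∑ s', P s (π s) s' * (w s' + c) :=
    Finset.sum_le_sum fun s' _ => mul_le_mul_of_nonneg_left (h s') (hP.1 s (π s) s')
  have h2 : ∑ s', P s (π s) s' * (w s' + c)
      = ∑ s', P s (π s) s' * w s' + c := by
    simp [mul_add, Finset.sum_add_distrib, ← Finset.sum_mul, hP.2 s (π s)]
  have := mul_le_mul_of_nonneg_left (h1.trans h2.le) hγ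
  linarith

lemma tcomp_shift {P : S → A → S → ℝ} {r : S → A → ℝ} {γ : ℝ}
    (hP : IsStochastic P) (hγ : 0 ≤ γ) (πs : ℕ → S → A) :
    ∀ (j k : ℕ) {v w : S → ℝ} {c : ℝ}, (∀ s, v s ≤ w s + c) →
      ∀ s, Tcomp P r γ πs k j v s ≤ Tcomp P r γ πs k j w s + γ ^ j * c := by
  intro j
  induction j with
  | zero => intro k v w c h s; simpa [Tcomp] using h s
  | succ j ih =>
    intro k v w c h s
    have h' := ih (k-1) h
    have := tpol_shift (r := r) hP hγ (πs k) h' s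
    simp only [Tcomp]
    calc Tpol P r γ (πs k) (Tcomp P r γ πs (k-1) j v) s
        ≤ Tpol P r γ (πs k) (Tcomp P r γ πs (k-1) j w) s + γ * (γ ^ j * c) := this
      _ = Tpol P r γ (πs k) (Tcomp P r γ πs (k-1) j w) s + γ ^ (j+1) * c := by ring

lemma tcomp_succ {P : S → A → S → ℝ} {r : S → A → ℝ} {γ : ℝ} (πs : ℕ → S → A) :
    ∀ (j k : ℕ) (v : S → ℝ),
      Tcomp P r γ πs k (j+1) v = Tcomp P r γ πs k j (Tpol P r γ (πs (k-j)) v) := by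
  intro j
  induction j with
  | zero => intro k v; simp [Tcomp]
  | succ j ih =>
    intro k v
    show Tpol P r γ (πs k) (Tcomp P r γ πs (k-1) (j+1) v) = _
    rw [ih (k-1) v]
    have : k - 1 - j = k - (j+1) := by omega
    rw [this]
    rfl

/-- One-step contraction for fixed-period API:
`‖v_* − v_{π_{k+1,m}}‖ ≤ γ ‖v_* − v_{π_{k,m}}‖ + (2γ/(1 − γ^m)) ε`. -/
theorem api_fixed_period_one_step (P : S → A → S → ℝ) (r : S → A → ℝ) (γ : ℝ)
    (hP : IsStochastic P) (hγ0 : 0 < γ) (hγ1 : γ < 1)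
    (πs : ℕ → S → A) (k m : ℕ) (hm : 1 ≤ m) (hk : m ≤ k)
    (vkm vk1m εk : S → ℝ) (ε : ℝ) (hε : 0 ≤ ε)
    (hfix : Tcomp P r γ πs k m vkm = vkm)
    (hfix' : Tcomp P r γ πs (k+1) m vk1m = vk1m)
    (hgreedy : Tpol P r γ (πs (k+1)) (vkm + εk) = Topt P r γ (vkm + εk))
    (herr : ‖εk‖ ≤ ε)
    (himp : ∀ s, Tpol P r γ (πs (k - m + 1)) vkm s - 2 * γ / (1 - γ ^ m) * ε ≤ vk1m s)
    (vstar : S → ℝ) (hstar : Topt P r γ vstar = vstar)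
    (hle : ∀ s, vkm s ≤ vstar s) (hle' : ∀ s, vk1m s ≤ vstar s) :
    ‖vstar - vk1m‖ ≤ γ * ‖vstar - vkm‖ + 2 * γ / (1 - γ ^ m) * ε := by
  set c : ℝ := 2 * γ / (1 - γ ^ m) * ε with hc
  have hγm1 : γ ^ m < 1 := pow_lt_one₀ hγ0.le hγ1 (by omega)
  have hγmne : (1 : ℝ) - γ ^ m ≠ 0 := by linarith
  have hc0 : 0 ≤ c := by
    apply mul_nonneg _ hε
    apply div_nonneg (by linarith) (by linarith)
  -- error bounds
  have hεk : ∀ s, |εk s| ≤ ε := fun s => by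
    have := norm_le_pi_norm εk s
    simp only [Real.norm_eq_abs] at this
    linarith
  have hvkm : ∀ s, vstar s - vkm s ≤ ‖vstar - vkm‖ := fun s => by
    have := norm_le_pi_norm (vstar - vkm) s
    simp only [Pi.sub_apply, Real.norm_eq_abs] at this
    exact (le_abs_self _).trans this
  -- decompose the fixed point of vkm
  have e1 : m - 1 + 1 = m := by omega
  have e2 : k - (m - 1) = k - m + 1 := by omega
  have hdec : vkm = Tcomp P r γ πs k (m-1) (Tpol P r γ (πs (k-m+1)) vkm) := by
    conv_lhs => rw [← hfix, ← e1, tcomp_succ, e2]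
  -- step 1: vkm ≤ Tcomp k (m-1) vk1m + γ^(m-1) c
  have h2 : ∀ s, Tpol P r γ (πs (k-m+1)) vkm s ≤ vk1m s + c := fun s => by
    have := himp s; linarith
  have h3 : ∀ s, vkm s ≤ Tcomp P r γ πs k (m-1) vk1m s + γ ^ (m-1) * c := by
    intro s
    conv_lhs => rw [hdec]
    exact tcomp_shift hP hγ0.le πs (m-1) k h2 s
  -- step 2: apply T_{π_{k+1}}
  have h4 : ∀ s, (vkm + εk) s ≤ Tcomp P r γ πs k (m-1) vk1m s + (γ ^ (m-1) * c + ε) := by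
    intro s
    have := hεk s
    have := h3 s
    simp only [Pi.add_apply]
    have : εk s ≤ ε := (le_abs_self _).trans (hεk s)
    linarith [h3 s]
  have h6 : Tpol P r γ (πs (k+1)) (Tcomp P r γ πs k (m-1) vk1m) = vk1m := by
    conv_rhs => rw [← hfix', ← e1]
    show _ = Tpol P r γ (πs (k+1)) (Tcomp P r γ πs (k+1-1) (m-1) vk1m)
    simp
  have h5 : ∀ s, Tpol P r γ (πs (k+1)) (vkm + εk) s ≤ vk1m s + γ * (γ ^ (m-1) * c + ε) := by
    intro s
    have := tpol_shift (r := r) hP hγ0.le (πs (k+1)) h4 s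
    rw [h6] at this
    exact this
  -- greedy policy for vstar
  have hargmax : ∀ s : S, ∃ a : A, Topt P r γ vstar s
      = r s a + γ * ∑ s', P s a s' * vstar s' := by
    intro s
    obtain ⟨a, -, ha⟩ := Finset.exists_mem_eq_sup' (univ_nonempty (α := A))
      (fun a => r s a + γ * ∑ s', P s a s' * vstar s')
    exact ⟨a, ha⟩
  choose πst hπst using hargmax
  have hfixst : ∀ s, Tpol P r γ πst vstar s = vstar s := by
    intro s
    rw [Tpol, ← hπst s, hstar]
  -- vstar ≤ vkm + εk + (‖vstar - vkm‖ + ε)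
  have h7 : ∀ s, vstar s ≤ (vkm + εk) s + (‖vstar - vkm‖ + ε) := by
    intro s
    have h1 := hvkm s
    have h2 : -εk s ≤ ε := (neg_le_abs _).trans (hεk s)
    simp only [Pi.add_apply]
    linarith
  have h8 : ∀ s, vstar s ≤ Tpol P r γ πst (vkm + εk) s + γ * (‖vstar - vkm‖ + ε) := by
    intro s
    have := tpol_shift (r := r) hP hγ0.le πst h7 s
    rw [hfixst s] at this
    exact this
  have h9 : ∀ s, Tpol P r γ πst (vkm + εk) s ≤ Tpol P r γ (πs (k+1)) (vkm + εk) s := by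
    intro s
    rw [hgreedy]
    exact Finset.le_sup' (fun a => r s a + γ * ∑ s', P s a s' * (vkm + εk) s')
      (mem_univ (πst s))
  -- arithmetic: γ^m * c + 2 γ ε = c
  have hgm : γ * γ ^ (m-1) = γ ^ m := by
    rw [← pow_succ', e1]
  have hcc : γ ^ m * c + 2 * γ * ε = c := by
    rw [hc]
    field_simp
    ring
  -- combine
  have hkey : ∀ s, vstar s - vk1m s ≤ γ * ‖vstar - vkm‖ + c := by
    intro s
    nlinarith [h5 s, h8 s, h9 s, hgm, hcc]
  apply (pi_norm_le_iff_of_nonneg (by positivity)).2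
  intro s
  simp only [Pi.sub_apply, Real.norm_eq_abs]
  rw [abs_of_nonneg (by linarith [hle' s])]
  exact hkey s
end
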